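/- If k ≤ m ≤ m' and the non-wrapping induced map F_{(m')} : F_2^{m'} → F_2^{m'-k+1} is balanced, then F_{(m)} : F_2^m → F_2^{m-k+1} is also balanced. -/

import Mathlib

/-- The cyclic (shift-invariant, periodic boundary) map on `n` bits induced by a
Boolean function `f` on `k` bits. -/
def cyc {k n : ℕ} (f : (Fin k → Bool) → Bool) (x : Fin n → Bool) : Fin n → Bool :=
  fun i => f fun j => x ⟨(i.val + j.val) % n, Nat.mod_lt _ i.pos⟩

/-- The non-wrapping induced map `F_{(m)} : F_2^m → F_2^{m-k+1}`. -/
def ncyc {k m : ℕ} (hk : k ≤ m) (f : (Fin k → Bool) → Bool) (x : Fin m → Bool) :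
    Fin (m - k + 1) → Bool :=
  fun i => f fun j => x ⟨i.val + j.val, by have h1 := i.isLt; have h2 := j.isLt; omega⟩

lemma step_aux {k n : ℕ} (hk1 : 1 ≤ k) (hk : k ≤ n) (f : (Fin k → Bool) → Bool)
    (hbal : ∀ y : Fin (n + 1 - k + 1) → Bool,
      (Finset.univ.filter fun x : Fin (n + 1) → Bool => ncyc (by omega) f x = y).card
        = 2 ^ (k - 1)) :
    ∀ y : Fin (n - k + 1) → Bool,
      (Finset.univ.filter fun x : Fin n → Bool => ncyc hk f x = y).card = 2 ^ (k - 1) := by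
  classical
  intro y
  have hk' : k ≤ n + 1 := by omega
  have hN : n - k + 1 < n + 1 - k + 1 := by omega
  set e : Bool → Fin (n + 1 - k + 1) → Bool :=
    fun b i => if h : i.val < n - k + 1 then y ⟨i.val, h⟩ else b with he
  have L1 : ∀ (x' : Fin (n + 1) → Bool) (i : ℕ) (hi : i < n - k + 1),
      ncyc hk' f x' ⟨i, by omega⟩ = ncyc hk f (Fin.init x') ⟨i, hi⟩ := by
    intro x' i hi
    rfl
  have hA1 : ∀ x' : Fin (n + 1) → Bool,
      (ncyc hk f (Fin.init x') = y) ↔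
        (ncyc hk' f x' = e false ∨ ncyc hk' f x' = e true) := by
    intro x'
    constructor
    · intro h
      have key : ncyc hk' f x' = e (ncyc hk' f x' ⟨n - k + 1, hN⟩) := by
        funext i
        by_cases hi : i.val < n - k + 1
        · show ncyc hk' f x' i = _
          simp only [he]
          rw [dif_pos hi]
          exact (L1 x' i.val hi).trans (congrFun h ⟨i.val, hi⟩)
        · have hiv : i = ⟨n - k + 1, hN⟩ := by
            apply Fin.ext; have := i.isLt; simp only []; omega
          rw [hiv, he]
          simp
      cases hb : ncyc hk' f x' ⟨n - k + 1, hN⟩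
      · left; rw [key, hb]
      · right; rw [key, hb]
    · rintro (h | h) <;>
      · funext i
        rw [← L1 x' i.val i.isLt, h, he]
        simp [i.isLt]
  have cardA : (Finset.univ.filter fun x' : Fin (n + 1) → Bool =>
      ncyc hk f (Fin.init x') = y).card = 2 ^ (k - 1) + 2 ^ (k - 1) := by
    rw [Finset.filter_congr (fun x (_ : x ∈ Finset.univ) => hA1 x), Finset.filter_or, Finset.card_union_of_disjoint, hbal, hbal]
    rw [Finset.disjoint_filter]
    intro x _ h1 h2
    have : e false = e true := h1 ▸ h2 ▸ rfl
    have := congrFun this ⟨n - k + 1, hN⟩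
    simp [he] at this
  have cardB : (Finset.univ.filter fun x' : Fin (n + 1) → Bool =>
      ncyc hk f (Fin.init x') = y).card
      = ((Finset.univ.filter fun x : Fin n → Bool => ncyc hk f x = y) ×ˢ
          (Finset.univ : Finset Bool)).card := by
    apply Finset.card_nbij' (fun x' => (Fin.init x', x' (Fin.last n)))
      (fun p => Fin.snoc p.1 p.2)
    · intro a ha
      simp only [Finset.mem_coe, Finset.mem_filter, Finset.mem_univ, true_and] at ha ⊢
      rw [Finset.mem_product]
      simp [ha]
    · intro p hp
      simp only [Finset.mem_coe, Finset.mem_product, Finset.mem_filter, Finset.mem_univ, true_and] at hp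
      simp only [Finset.mem_coe, Finset.mem_filter, Finset.mem_univ, true_and]
      rw [Fin.init_snoc]
      exact hp.1
    · intro a _
      simp [Fin.snoc_init_self]
    · intro p _
      simp [Fin.init_snoc, Fin.snoc_last]
  rw [cardA] at cardB
  rw [Finset.card_product] at cardB
  simp only [Finset.card_univ, Fintype.card_bool] at cardB
  omega

theorem stmt1 {k m m' : ℕ} (hk : k ≤ m) (hm : m ≤ m') (f : (Fin k → Bool) → Bool)
    (hbal : ∀ y : Fin (m' - k + 1) → Bool,
      (Finset.univ.filter fun x : Fin m' → Bool => ncyc (le_trans hk hm) f x = y).card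
        = 2 ^ (k - 1)) :
    ∀ y : Fin (m - k + 1) → Bool,
      (Finset.univ.filter fun x : Fin m → Bool => ncyc hk f x = y).card = 2 ^ (k - 1) := by
  rcases Nat.eq_zero_or_pos k with hk0 | hk1
  · subst hk0
    exfalso
    have h := hbal (fun _ => !(f (fun j => j.elim0)))
    rw [Finset.filter_false_of_mem] at h
    · simp at h
    · intro x _ hx
      have h0 : (0 : ℕ) < m' - 0 + 1 := by omega
      have := congrFun hx ⟨0, h0⟩
      have harg : (fun j : Fin 0 => x ⟨(0 : ℕ) + j.val, by omega⟩) = fun j => j.elim0 := by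
        funext j; exact j.elim0
      simp only [ncyc, harg] at this
      simp at this
  · obtain ⟨j, rfl⟩ := Nat.exists_eq_add_of_le hm
    revert hbal hm
    induction j with
    | zero => exact fun _ hbal y => hbal y
    | succ j ih =>
        intro hm hbal
        exact ih (by omega) (step_aux hk1 (by omega) f (fun y => hbal y))
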